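/- Let two anchors A_i, A_j and an uncertainty disk 𝒜_U of radius r centered at p* be given, with the line A_iA_j not intersecting 𝒜_U. Then over p ∈ 𝒜_U, the function p ↦ 1/sin²(∠A_i p A_j) attains its maximum on the boundary circle of 𝒜_U. -/

import Mathlib

open Real EuclideanGeometry

noncomputable instance : Module.Oriented ℝ (EuclideanSpace ℝ (Fin 2)) (Fin 2) :=
  ⟨Module.Basis.orientation (EuclideanSpace.basisFun (Fin 2) ℝ).toBasis⟩

instance : Fact (Module.finrank ℝ (EuclideanSpace ℝ (Fin 2)) = 2) :=
  ⟨finrank_euclideanSpace_fin⟩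

private lemma sin_abs_eq' {x : ℝ} (h1 : -π < x) (h2 : x ≤ π) :
    Real.sin |x| = |Real.sin x| := by
  rcases le_or_gt 0 x with h | h
  · rw [abs_of_nonneg h, abs_of_nonneg (Real.sin_nonneg_of_nonneg_of_le_pi h h2)]
  · rw [abs_of_neg h, Real.sin_neg,
      abs_of_nonpos (Real.sin_nonpos_of_nonpos_of_neg_pi_le h.le h1.le)]

private lemma sin_angle_eq_abs_sin_oangle (A p B : EuclideanSpace ℝ (Fin 2))
    (hA : A ≠ p) (hB : B ≠ p) :
    Real.sin (EuclideanGeometry.angle A p B) = |Real.Angle.sin (∡ A p B)| := by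
  rw [EuclideanGeometry.angle_eq_abs_oangle_toReal hA hB,
    sin_abs_eq' (Real.Angle.neg_pi_lt_toReal _) (Real.Angle.toReal_le_pi _)]
  congr 1
  conv_rhs => rw [← Real.Angle.coe_toReal (∡ A p B), Real.Angle.sin_coe]

local notation "E2" => EuclideanSpace ℝ (Fin 2)

/-- If the line through the anchors A, B misses the closed disk of radius r around p*,
then p ↦ 1/sin²(∠ A p B) attains its maximum over the disk at a boundary point. -/
theorem stmt_15 (A B pstar : EuclideanSpace ℝ (Fin 2)) (r : ℝ) (hr : 0 < r)
    (hAB : A ≠ B)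
    (hline : ∀ t : ℝ, r < dist (A + t • (B - A)) pstar) :
    ∃ p₀ : EuclideanSpace ℝ (Fin 2), dist p₀ pstar = r ∧
      ∀ p : EuclideanSpace ℝ (Fin 2), dist p pstar ≤ r →
        1 / Real.sin (EuclideanGeometry.angle A p B) ^ 2
          ≤ 1 / Real.sin (EuclideanGeometry.angle A p₀ B) ^ 2 := by
  set D : Set E2 := Metric.closedBall pstar r with hD
  have hA_out : r < dist A pstar := by simpa using hline 0
  have hB_out : r < dist B pstar := by
    have := hline 1
    rwa [one_smul, add_sub_cancel] at this
  -- points of the disk are not on the line; in particular not A, B, not collinear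
  have hne : ∀ p ∈ D, p ≠ A ∧ p ≠ B := by
    intro p hp
    rw [hD, Metric.mem_closedBall] at hp
    constructor <;> rintro rfl <;> linarith
  have hncol : ∀ p ∈ D, ¬Collinear ℝ ({A, p, B} : Set E2) := by
    intro p hp hcol
    rw [hD, Metric.mem_closedBall] at hp
    obtain ⟨v, hv⟩ := (collinear_iff_of_mem (show A ∈ ({A, p, B} : Set E2) by simp)).1 hcol
    obtain ⟨tb, htb⟩ := hv B (by simp)
    obtain ⟨tp, htp⟩ := hv p (by simp)
    have htb0 : tb ≠ 0 := by
      rintro rfl; apply hAB; rw [htb]; simp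
    have hpeq : p = A + (tp / tb) • (B - A) := by
      rw [htp, htb]
      simp only [vadd_eq_add, add_sub_cancel_right, smul_smul]
      rw [div_mul_cancel₀ _ htb0]
      abel
    have := hline (tp / tb)
    rw [← hpeq] at this
    linarith
  have hsin : ∀ p ∈ D, 0 < Real.sin (EuclideanGeometry.angle A p B) := fun p hp =>
    EuclideanGeometry.sin_pos_of_not_collinear (hncol p hp)
  -- the objective function and its continuity on the disk
  set f : E2 → ℝ := fun p => 1 / Real.sin (EuclideanGeometry.angle A p B) ^ 2 with hf
  have hangCont : ContinuousOn (fun p => EuclideanGeometry.angle A p B) D := by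
    intro p hp
    have h1 : ContinuousAt (fun y : E2 × E2 × E2 => EuclideanGeometry.angle y.1 y.2.1 y.2.2)
        (A, p, B) :=
      EuclideanGeometry.continuousAt_angle (hne p hp).1.symm (hne p hp).2.symm
    have h2 : Continuous (fun q : E2 => ((A, q, B) : E2 × E2 × E2)) := by continuity
    have h3 : ContinuousAt ((fun y : E2 × E2 × E2 => EuclideanGeometry.angle y.1 y.2.1 y.2.2)
        ∘ (fun q : E2 => (A, q, B))) p := ContinuousAt.comp (x := p) h1 h2.continuousAt
    exact h3.continuousWithinAt
  have hfCont : ContinuousOn f D := by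
    apply ContinuousOn.div continuousOn_const
      ((Real.continuous_sin.comp_continuousOn hangCont).pow 2)
    intro p hp
    exact pow_ne_zero 2 (hsin p hp).ne'
  -- maximizer on the compact disk
  obtain ⟨p₁, hp₁D, hp₁max⟩ := (isCompact_closedBall pstar r).exists_isMaxOn
    ⟨pstar, Metric.mem_closedBall_self hr.le⟩ hfCont
  have hp₁r : dist p₁ pstar ≤ r := Metric.mem_closedBall.1 hp₁D
  -- circumcircle of A, B, p₁
  have hindep : AffineIndependent ℝ ![A, B, p₁] := by
    rw [affineIndependent_iff_not_collinear_set]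
    intro h
    exact hncol p₁ hp₁D (h.subset (by intro x hx; simp at hx ⊢; tauto))
  set tri : Affine.Triangle ℝ E2 := ⟨![A, B, p₁], hindep⟩ with htri
  set s : EuclideanGeometry.Sphere E2 := tri.circumsphere with hs
  have hAs : A ∈ s := by have := tri.mem_circumsphere 0; simpa [htri] using this
  have hBs : B ∈ s := by have := tri.mem_circumsphere 1; simpa [htri] using this
  have hp₁s : p₁ ∈ s := by have := tri.mem_circumsphere 2; simpa [htri] using this
  have hAc : dist A s.center = s.radius := EuclideanGeometry.mem_sphere.1 hAs
  have hBc : dist B s.center = s.radius := EuclideanGeometry.mem_sphere.1 hBs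
  have hp₁c : dist p₁ s.center = s.radius := EuclideanGeometry.mem_sphere.1 hp₁s
  have hRpos : 0 < s.radius := by
    rcases (dist_nonneg.trans_eq hAc).lt_or_eq with h | h
    · exact h
    · exfalso
      apply hAB
      have h1 : A = s.center := by rwa [← h, dist_eq_zero] at hAc
      have h2 : B = s.center := by rw [← h] at hBc; rwa [dist_eq_zero] at hBc
      rw [h1, h2]
  -- the law of sines on the circumcircle
  have hlaw : ∀ q, q ∈ s → q ∈ D →
      Real.sin (EuclideanGeometry.angle A q B) = dist A B / (2 * s.radius) := by
    intro q hqs hqD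
    have hqA : A ≠ q := (hne q hqD).1.symm
    have hqB : q ≠ B := (hne q hqD).2
    have := EuclideanGeometry.Sphere.dist_div_sin_oangle_eq_two_mul_radius
      hAs hqs hBs hqA hAB hqB.symm.symm
    rw [sin_angle_eq_abs_sin_oangle A q B hqA hqB.symm]
    have habs : |Real.Angle.sin (∡ A q B)| ≠ 0 := by
      intro h0
      rw [h0, div_zero] at this
      nlinarith
    field_simp at this ⊢
    linarith [this]
  -- path along the circumcircle from p₁ to A
  set ori : Orientation ℝ E2 (Fin 2) := Module.Oriented.positiveOrientation with hori
  set c : E2 := s.center with hc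
  set v : E2 := p₁ - c with hv
  set h : ℝ → E2 := fun t => c + (Real.cos t • v + Real.sin t • ori.rightAngleRotation v)
    with hh
  have hnorm : ∀ t, dist (h t) c = s.radius := by
    intro t
    have : h t - c = ori.rotation (t : Real.Angle) v := by
      rw [Orientation.rotation_apply, Real.Angle.cos_coe, Real.Angle.sin_coe, hh]
      simp
    rw [dist_eq_norm, this, LinearIsometryEquiv.norm_map]
    rw [hv, ← dist_eq_norm]
    exact hp₁c
  have hh0 : h 0 = p₁ := by rw [hh]; simp [hv]
  have hvnorm : ‖v‖ = s.radius := by rw [hv, ← dist_eq_norm]; exact hp₁c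
  have hAnorm : ‖A - c‖ = s.radius := by rw [← dist_eq_norm]; exact hAc
  obtain ⟨tA, htA⟩ : ∃ t : ℝ, h t = A := by
    refine ⟨(ori.oangle v (A - c)).toReal, ?_⟩
    have hrot : ori.rotation (ori.oangle v (A - c)) v = A - c :=
      (ori.rotation_oangle_eq_iff_norm_eq v (A - c)).2 (by rw [hvnorm, hAnorm])
    have : h ((ori.oangle v (A - c)).toReal)
        = c + ori.rotation (ori.oangle v (A - c)) v := by
      rw [hh]
      simp only
      rw [← Real.Angle.cos_coe, ← Real.Angle.sin_coe, ← Orientation.rotation_apply,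
        Real.Angle.coe_toReal]
    rw [this, hrot]
    abel
  -- intermediate value: a boundary point on the circumcircle
  have hcont : Continuous (fun t => dist (h t) pstar) := by
    apply Continuous.dist _ continuous_const
    rw [hh]
    exact continuous_const.add ((Real.continuous_cos.smul continuous_const).add
      (Real.continuous_sin.smul continuous_const))
  obtain ⟨t₀, _, ht₀⟩ : ∃ t₀ ∈ Set.uIcc (0 : ℝ) tA, dist (h t₀) pstar = r := by
    have := intermediate_value_uIcc (a := (0:ℝ)) (b := tA)
      (f := fun t => dist (h t) pstar) hcont.continuousOn
    have hmem : r ∈ Set.uIcc (dist (h 0) pstar) (dist (h tA) pstar) := by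
      rw [hh0, htA]
      exact Set.mem_uIcc.2 (Or.inl ⟨hp₁r, hA_out.le⟩)
    obtain ⟨t₀, ht₀mem, ht₀⟩ := this hmem
    exact ⟨t₀, ht₀mem, ht₀⟩
  refine ⟨h t₀, ht₀, ?_⟩
  have hp₀D : h t₀ ∈ D := Metric.mem_closedBall.2 ht₀.le
  have hp₀s : h t₀ ∈ s := EuclideanGeometry.mem_sphere.2 (hnorm t₀)
  have hkey : Real.sin (EuclideanGeometry.angle A p₁ B)
      = Real.sin (EuclideanGeometry.angle A (h t₀) B) := by
    rw [hlaw p₁ hp₁s hp₁D, hlaw (h t₀) hp₀s hp₀D]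
  intro p hp
  have hpD : p ∈ D := Metric.mem_closedBall.2 hp
  have := hp₁max hpD
  rw [hf] at this
  simp only at this
  rw [hkey] at this
  exact this
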